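/- The Grossman–Larson product on G, defined by c ⋆ d := (c ◁ d) · d, is associative, has identity e = (1∅, 0), and in components equals c ⋆ d = ((c1 ∘̃ d) ⧢ d1, (c2 ∘̃ d) + (c1 ∘̃ d) ⧢ d2); thus (G, ⋆) is a monoid. -/

import Mathlib

/-- Words over the alphabet X = {x₀, x₁}, encoded as lists of booleans
(`false` ↔ x₀, `true` ↔ x₁). -/
abbrev Word : Type := List Bool

/-- Noncommutative formal power series over X with real coefficients. -/
abbrev Series : Type := Word → ℝ

/-- Auxiliary recursion computing the coefficient of the shuffle product. -/
def sh : Word → Series → Series → ℝ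
  | [], c, d => c [] * d []
  | a :: w, c, d => sh w (fun u => c (a :: u)) d + sh w c (fun u => d (a :: u))

/-- The shuffle product of two series. -/
def shuffle (c d : Series) : Series := fun w => sh w c d

/-- Left concatenation by the letter x₀. -/
def X0f (c : Series) : Series := fun w =>
  match w with
  | false :: w' => c w'
  | _ => 0

/-- Left concatenation by the letter x₁. -/
def X1f (c : Series) : Series := fun w =>
  match w with
  | true :: w' => c w'
  | _ => 0

/-- The indicator series of a word. -/
def deltaW (η : Word) : Series := fun w => if w = η then 1 else 0

/-- The shuffle unit 1∅. -/
def oneS : Series := deltaW []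

/-- Mixed composition product of a word with a pair of series:
∅ ∘̃ z = ∅, (x₀η) ∘̃ z = x₀(η ∘̃ z),
(x₁η) ∘̃ z = x₁(z₁ ⧢ (η ∘̃ z)) + x₀(z₂ ⧢ (η ∘̃ z)). -/
def wmix : Word → Series × Series → Series
  | [], _ => oneS
  | false :: η, z => X0f (wmix η z)
  | true :: η, z => X1f (shuffle z.1 (wmix η z)) + X0f (shuffle z.2 (wmix η z))

/-- Mixed composition product `c ∘̃ z`, extended linearly in the left argument.
(Since `wmix η z` vanishes on words shorter than `η`, the sum may be truncated.) -/
def mixcomp (c : Series) (z : Series × Series) : Series := fun w =>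
  ∑ n ∈ Finset.range (w.length + 1), ∑ f : Fin n → Bool,
    c (List.ofFn f) * wmix (List.ofFn f) z w

/-- Composition product of a word with a series:
∅ ∘ d = ∅, (x₀η) ∘ d = x₀(η ∘ d), (x₁η) ∘ d = x₀(d ⧢ (η ∘ d)). -/
def wcomp : Word → Series → Series
  | [], _ => oneS
  | false :: η, d => X0f (wcomp η d)
  | true :: η, d => X0f (shuffle d (wcomp η d))

/-- Composition product `c ∘ d`, extended linearly in the left argument. -/
def compP (c d : Series) : Series := fun w =>
  ∑ n ∈ Finset.range (w.length + 1), ∑ f : Fin n → Bool,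
    c (List.ofFn f) * wcomp (List.ofFn f) d w

/-- The group product on G: (c₁,c₂)·(d₁,d₂) = (c₁ ⧢ d₁, c₂ + c₁ ⧢ d₂). -/
def gmul (c d : Series × Series) : Series × Series :=
  (shuffle c.1 d.1, c.2 + shuffle c.1 d.2)

/-- The identity element e = (1∅, 0) of G. -/
def geId : Series × Series := (oneS, 0)

/-- Shuffle powers. -/
def shPow (c : Series) : ℕ → Series
  | 0 => oneS
  | n + 1 => shuffle c (shPow c n)

/-- Shuffle inverse of a series with constant coefficient 1, via the
geometric series c^{⧢ -1} = Σ_k (1∅ - c)^{⧢ k} (truncated by word length,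
which is exact since 1∅ - c is proper). -/
def shInv (c : Series) : Series := fun w =>
  ∑ k ∈ Finset.range (w.length + 1), shPow (oneS - c) k w

/-- The group inverse in (G,·). -/
def ginv (c : Series × Series) : Series × Series :=
  (shInv c.1, -(shuffle (shInv c.1) c.2))

/-- The product ◁ on G, componentwise mixed composition. -/
def triOp (c d : Series × Series) : Series × Series :=
  (mixcomp c.1 d, mixcomp c.2 d)

/-- The Grossman–Larson product c ⋆ d = (c ◁ d) · d. -/
def starOp (c d : Series × Series) : Series × Series := gmul (triOp c d) d

def Dl (a : Bool) (c : Series) : Series := fun u => c (a :: u)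

lemma sh_nil (c d : Series) : sh [] c d = c [] * d [] := rfl

lemma sh_cons (a : Bool) (w : Word) (c d : Series) :
    sh (a :: w) c d = sh w (Dl a c) d + sh w c (Dl a d) := rfl

lemma sh_add_right : ∀ (w : Word) (c d d' : Series),
    sh w c (fun u => d u + d' u) = sh w c d + sh w c d' := by
  intro w
  induction w with
  | nil => intro c d d'; simp [sh_nil]; ring
  | cons a w ih =>
    intro c d d'
    rw [sh_cons, sh_cons, sh_cons]
    have h1 : Dl a (fun u => d u + d' u) = fun u => Dl a d u + Dl a d' u := rfl
    rw [h1, ih, ih]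
    ring

lemma sh_add_left : ∀ (w : Word) (c c' d : Series),
    sh w (fun u => c u + c' u) d = sh w c d + sh w c' d := by
  intro w
  induction w with
  | nil => intro c c' d; simp [sh_nil]; ring
  | cons a w ih =>
    intro c c' d
    rw [sh_cons, sh_cons, sh_cons]
    have h1 : Dl a (fun u => c u + c' u) = fun u => Dl a c u + Dl a c' u := rfl
    rw [h1, ih, ih]
    ring

lemma sh_smul_right : ∀ (w : Word) (c d : Series) (r : ℝ),
    sh w c (fun u => r * d u) = r * sh w c d := by
  intro w
  induction w with
  | nil => intro c d r; simp [sh_nil]; ring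
  | cons a w ih =>
    intro c d r
    rw [sh_cons, sh_cons]
    have h1 : Dl a (fun u => r * d u) = fun u => r * Dl a d u := rfl
    rw [h1, ih, ih]
    ring

lemma sh_zero_right : ∀ (w : Word) (c : Series), sh w c (fun _ => 0) = 0 := by
  intro w
  induction w with
  | nil => intro c; simp [sh_nil]
  | cons a w ih =>
    intro c
    rw [sh_cons]
    have h1 : Dl a (fun _ => (0:ℝ)) = fun _ => (0:ℝ) := rfl
    rw [h1, ih, ih]
    ring

lemma sh_zero_left : ∀ (w : Word) (d : Series), sh w (fun _ => 0) d = 0 := by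
  intro w
  induction w with
  | nil => intro d; simp [sh_nil]
  | cons a w ih =>
    intro d
    rw [sh_cons]
    have h1 : Dl a (fun _ => (0:ℝ)) = fun _ => (0:ℝ) := rfl
    rw [h1, ih, ih]
    ring

lemma sh_sum_right {ι : Type*} (s : Finset ι) (d : ι → Series) (w : Word) (c : Series) :
    sh w c (fun u => ∑ i ∈ s, d i u) = ∑ i ∈ s, sh w c (d i) := by
  classical
  induction s using Finset.induction_on with
  | empty => simp [sh_zero_right]
  | @insert a s ha ih =>
    simp only [Finset.sum_insert ha]
    rw [sh_add_right]
    rw [ih]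

lemma sh_comm : ∀ (w : Word) (c d : Series), sh w c d = sh w d c := by
  intro w
  induction w with
  | nil => intro c d; simp [sh_nil]; ring
  | cons a w ih =>
    intro c d
    rw [sh_cons, sh_cons, ih (Dl a c) d, ih c (Dl a d)]
    ring

lemma sh_congr : ∀ (w : Word) {c c' d d' : Series},
    (∀ u : Word, u.length ≤ w.length → c u = c' u) →
    (∀ u : Word, u.length ≤ w.length → d u = d' u) →
    sh w c d = sh w c' d' := by
  intro w
  induction w with
  | nil =>
    intro c c' d d' hc hd
    rw [sh_nil, sh_nil, hc [] (by simp), hd [] (by simp)]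
  | cons a w ih =>
    intro c c' d d' hc hd
    rw [sh_cons, sh_cons]
    have h1 : sh w (Dl a c) d = sh w (Dl a c') d' :=
      ih (fun u hu => hc (a :: u) (by simpa using hu))
         (fun u hu => hd u (by simp; omega))
    have h2 : sh w c (Dl a d) = sh w c' (Dl a d') :=
      ih (fun u hu => hc u (by simp; omega))
         (fun u hu => hd (a :: u) (by simpa using hu))
    rw [h1, h2]

lemma sh_one_left : ∀ (w : Word) (c : Series), sh w oneS c = c w := by
  intro w
  induction w with
  | nil => intro c; rw [sh_nil]; simp [oneS, deltaW]
  | cons a w ih =>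
    intro c
    rw [sh_cons]
    have h1 : Dl a oneS = fun _ => (0:ℝ) := by
      funext u; simp [Dl, oneS, deltaW]
    rw [h1, sh_zero_left, ih]
    simp [Dl]

lemma sh_assoc : ∀ (w : Word) (x y c : Series),
    sh w (shuffle x y) c = sh w x (shuffle y c) := by
  intro w
  induction w with
  | nil => intro x y c; simp [sh_nil, shuffle]; ring
  | cons a w ih =>
    intro x y c
    have hx : Dl a (shuffle x y) = fun u => shuffle (Dl a x) y u + shuffle x (Dl a y) u := rfl
    have hy : Dl a (shuffle y c) = fun u => shuffle (Dl a y) c u + shuffle y (Dl a c) u := rfl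
    rw [sh_cons, sh_cons, hx, hy, sh_add_left, sh_add_right, ih, ih, ih]
    ring

lemma shuffle_comm (x y : Series) : shuffle x y = shuffle y x :=
  funext fun w => sh_comm w x y

lemma sh_left_comm (w : Word) (x y c : Series) :
    sh w x (shuffle y c) = sh w y (shuffle x c) := by
  rw [← sh_assoc, shuffle_comm, sh_assoc]

lemma sh_vanish : ∀ (w : Word) (k : ℕ) (c A : Series), w.length < k →
    (∀ u : Word, u.length < k → A u = 0) → sh w c A = 0 := by
  intro w
  induction w with
  | nil =>
    intro k c A hk hA
    rw [sh_nil, hA [] (by simpa using hk), mul_zero]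
  | cons a w ih =>
    intro k c A hk hA
    obtain ⟨k', rfl⟩ : ∃ k', k = k' + 1 := ⟨k - 1, by omega⟩
    have h1 : sh w (Dl a c) A = 0 := ih (k' + 1) _ _ (by simp at hk ⊢; omega) hA
    have h2 : sh w c (Dl a A) = 0 := by
      refine ih k' _ _ (by simp at hk ⊢; omega) ?_
      intro u hu
      exact hA (a :: u) (by simp; omega)
    calc sh (a :: w) c A = sh w (Dl a c) A + sh w c (Dl a A) := rfl
    _ = 0 := by rw [h1, h2, add_zero]

lemma wmix_vanish : ∀ (η : Word) (z : Series × Series) (w : Word),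
    w.length < η.length → wmix η z w = 0 := by
  intro η
  induction η with
  | nil => intro z w h; simp at h
  | cons a η ih =>
    intro z w h
    match a, w with
    | false, [] => rfl
    | false, false :: w' =>
      show wmix η z w' = 0
      exact ih z w' (by simp at h ⊢; omega)
    | false, true :: w' => rfl
    | true, [] => show (0:ℝ) + 0 = 0; ring
    | true, true :: w' =>
      show sh w' z.1 (wmix η z) + 0 = 0
      rw [sh_vanish w' η.length z.1 (wmix η z) (by simp at h ⊢; omega) (fun u hu => ih z u hu)]
      ring
    | true, false :: w' =>
      show (0:ℝ) + sh w' z.2 (wmix η z) = 0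
      rw [sh_vanish w' η.length z.2 (wmix η z) (by simp at h ⊢; omega) (fun u hu => ih z u hu)]
      ring

lemma mixcomp_eq (c : Series) (z : Series × Series) (w : Word) (N : ℕ) (h : w.length ≤ N) :
    mixcomp c z w = ∑ n ∈ Finset.range (N + 1), ∑ f : Fin n → Bool,
      c (List.ofFn f) * wmix (List.ofFn f) z w := by
  refine Finset.sum_subset (Finset.range_subset_range.2 (by omega)) ?_
  intro n hn hnot
  refine Finset.sum_eq_zero fun f _ => ?_
  rw [wmix_vanish (List.ofFn f) z w (by simp at hnot ⊢; omega), mul_zero]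

lemma mixcomp_nil (c : Series) (z : Series × Series) : mixcomp c z [] = c [] := by
  show ∑ n ∈ Finset.range (List.length [] + 1), ∑ f : Fin n → Bool,
      c (List.ofFn f) * wmix (List.ofFn f) z [] = c []
  rw [List.length_nil, Finset.sum_range_one, Fintype.sum_unique]
  simp [wmix, oneS, deltaW]

lemma ofFn_consEquiv (n : ℕ) (b : Bool) (f : Fin n → Bool) :
    List.ofFn ((Fin.consEquiv (fun _ : Fin (n+1) => Bool)) (b, f)) = b :: List.ofFn f := by
  rw [List.ofFn_succ]
  simp [Fin.consEquiv]

lemma mixcomp_true (c : Series) (z : Series × Series) (w : Word) :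
    mixcomp c z (true :: w) = sh w z.1 (mixcomp (Dl true c) z) := by
  have key : ∀ n : ℕ, (∑ f : Fin (n+1) → Bool, c (List.ofFn f) * wmix (List.ofFn f) z (true :: w))
      = ∑ f : Fin n → Bool, c (true :: List.ofFn f) * sh w z.1 (wmix (List.ofFn f) z) := by
    intro n
    rw [← Equiv.sum_comp (Fin.consEquiv (fun _ : Fin (n+1) => Bool))
      (fun g : Fin (n+1) → Bool => c (List.ofFn g) * wmix (List.ofFn g) z (true :: w))]
    rw [Fintype.sum_prod_type]
    rw [Fintype.sum_bool]
    simp only [ofFn_consEquiv]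
    have hfalse : ∀ f : Fin n → Bool, wmix (false :: List.ofFn f) z (true :: w) = 0 := fun f => rfl
    have htrue : ∀ f : Fin n → Bool, wmix (true :: List.ofFn f) z (true :: w)
        = sh w z.1 (wmix (List.ofFn f) z) := by
      intro f
      show sh w z.1 (wmix (List.ofFn f) z) + 0 = _
      ring
    simp only [hfalse, htrue, mul_zero, Finset.sum_const_zero, add_zero]
  have h0 : (∑ f : Fin 0 → Bool, c (List.ofFn f) * wmix (List.ofFn f) z (true :: w)) = 0 := by
    rw [Fintype.sum_unique]
    simp [wmix, oneS, deltaW]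
  have hr : sh w z.1 (mixcomp (Dl true c) z)
      = ∑ n ∈ Finset.range (w.length + 1), ∑ f : Fin n → Bool,
          c (true :: List.ofFn f) * sh w z.1 (wmix (List.ofFn f) z) := by
    have h1 : sh w z.1 (mixcomp (Dl true c) z)
        = sh w z.1 (fun u => ∑ n ∈ Finset.range (w.length + 1), ∑ f : Fin n → Bool,
            (Dl true c) (List.ofFn f) * wmix (List.ofFn f) z u) :=
      sh_congr w (fun _ _ => rfl) (fun u hu => mixcomp_eq (Dl true c) z u w.length hu)
    rw [h1, sh_sum_right]
    refine Finset.sum_congr rfl fun n _ => ?_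
    rw [sh_sum_right]
    refine Finset.sum_congr rfl fun f _ => ?_
    exact sh_smul_right w z.1 (wmix (List.ofFn f) z) (c (true :: List.ofFn f))
  show ∑ n ∈ Finset.range ((true :: w).length + 1), ∑ f : Fin n → Bool,
      c (List.ofFn f) * wmix (List.ofFn f) z (true :: w) = _
  rw [show (true :: w).length + 1 = (w.length + 1) + 1 from rfl, Finset.sum_range_succ']
  rw [h0, add_zero, hr]
  exact Finset.sum_congr rfl fun n _ => key n

lemma mixcomp_false (c : Series) (z : Series × Series) (w : Word) :
    mixcomp c z (false :: w) = mixcomp (Dl false c) z w + sh w z.2 (mixcomp (Dl true c) z) := by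
  have key : ∀ n : ℕ, (∑ f : Fin (n+1) → Bool, c (List.ofFn f) * wmix (List.ofFn f) z (false :: w))
      = (∑ f : Fin n → Bool, c (false :: List.ofFn f) * wmix (List.ofFn f) z w)
        + ∑ f : Fin n → Bool, c (true :: List.ofFn f) * sh w z.2 (wmix (List.ofFn f) z) := by
    intro n
    rw [← Equiv.sum_comp (Fin.consEquiv (fun _ : Fin (n+1) => Bool))
      (fun g : Fin (n+1) → Bool => c (List.ofFn g) * wmix (List.ofFn g) z (false :: w))]
    rw [Fintype.sum_prod_type]
    rw [Fintype.sum_bool]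
    simp only [ofFn_consEquiv]
    have hfalse : ∀ f : Fin n → Bool, wmix (false :: List.ofFn f) z (false :: w)
        = wmix (List.ofFn f) z w := fun f => rfl
    have htrue : ∀ f : Fin n → Bool, wmix (true :: List.ofFn f) z (false :: w)
        = sh w z.2 (wmix (List.ofFn f) z) := by
      intro f
      show (0:ℝ) + sh w z.2 (wmix (List.ofFn f) z) = _
      ring
    simp only [hfalse, htrue]
    ring
  have h0 : (∑ f : Fin 0 → Bool, c (List.ofFn f) * wmix (List.ofFn f) z (false :: w)) = 0 := by
    rw [Fintype.sum_unique]
    simp [wmix, oneS, deltaW]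
  have hr : sh w z.2 (mixcomp (Dl true c) z)
      = ∑ n ∈ Finset.range (w.length + 1), ∑ f : Fin n → Bool,
          c (true :: List.ofFn f) * sh w z.2 (wmix (List.ofFn f) z) := by
    have h1 : sh w z.2 (mixcomp (Dl true c) z)
        = sh w z.2 (fun u => ∑ n ∈ Finset.range (w.length + 1), ∑ f : Fin n → Bool,
            (Dl true c) (List.ofFn f) * wmix (List.ofFn f) z u) :=
      sh_congr w (fun _ _ => rfl) (fun u hu => mixcomp_eq (Dl true c) z u w.length hu)
    rw [h1, sh_sum_right]
    refine Finset.sum_congr rfl fun n _ => ?_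
    rw [sh_sum_right]
    refine Finset.sum_congr rfl fun f _ => ?_
    exact sh_smul_right w z.2 (wmix (List.ofFn f) z) (c (true :: List.ofFn f))
  have hl : mixcomp (Dl false c) z w
      = ∑ n ∈ Finset.range (w.length + 1), ∑ f : Fin n → Bool,
          c (false :: List.ofFn f) * wmix (List.ofFn f) z w := rfl
  show ∑ n ∈ Finset.range ((false :: w).length + 1), ∑ f : Fin n → Bool,
      c (List.ofFn f) * wmix (List.ofFn f) z (false :: w) = _
  rw [show (false :: w).length + 1 = (w.length + 1) + 1 from rfl, Finset.sum_range_succ']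
  rw [h0, add_zero, hr, hl]
  rw [← Finset.sum_add_distrib]
  exact Finset.sum_congr rfl fun n _ => key n

lemma mixcomp_add (c c' : Series) (z : Series × Series) (w : Word) :
    mixcomp (fun u => c u + c' u) z w = mixcomp c z w + mixcomp c' z w := by
  show (∑ n ∈ Finset.range (w.length + 1), ∑ f : Fin n → Bool,
      (c (List.ofFn f) + c' (List.ofFn f)) * wmix (List.ofFn f) z w) = _
  simp [add_mul, Finset.sum_add_distrib, mixcomp]

lemma mixcomp_add_fun (c c' : Series) (z : Series × Series) :
    mixcomp (fun u => c u + c' u) z = fun w => mixcomp c z w + mixcomp c' z w :=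
  funext fun w => mixcomp_add c c' z w

lemma mixcomp_zero (z : Series × Series) : mixcomp (fun _ => 0) z = fun _ => 0 := by
  funext w; simp [mixcomp]

lemma mixcomp_oneS (z : Series × Series) : mixcomp oneS z = oneS := by
  funext w
  match w with
  | [] => rw [mixcomp_nil]
  | true :: w =>
    rw [mixcomp_true]
    have h : Dl true oneS = fun _ => (0:ℝ) := by funext u; simp [Dl, oneS, deltaW]
    rw [h, mixcomp_zero, sh_zero_right]
    simp [oneS, deltaW]
  | false :: w =>
    rw [mixcomp_false]
    have h1 : Dl false oneS = fun _ => (0:ℝ) := by funext u; simp [Dl, oneS, deltaW]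
    have h2 : Dl true oneS = fun _ => (0:ℝ) := by funext u; simp [Dl, oneS, deltaW]
    rw [h1, h2, mixcomp_zero, sh_zero_right]
    simp [oneS, deltaW]

lemma mixcomp_geId : ∀ (w : Word) (c : Series), mixcomp c geId w = c w := by
  intro w
  induction w with
  | nil => intro c; rw [mixcomp_nil]
  | cons a w ih =>
    intro c
    match a with
    | true =>
      rw [mixcomp_true]
      show sh w oneS (mixcomp (Dl true c) geId) = _
      rw [sh_one_left, ih]
      rfl
    | false =>
      rw [mixcomp_false, ih]
      show Dl false c w + sh w (fun _ => 0) (mixcomp (Dl true c) geId) = _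
      rw [sh_zero_left]
      simp [Dl]

lemma mixcomp_geId_fun (c : Series) : mixcomp c geId = c :=
  funext fun w => mixcomp_geId w c

lemma mixcomp_shuffle_aux : ∀ (n : ℕ) (w : Word), w.length ≤ n → ∀ (x y : Series)
    (z : Series × Series), mixcomp (shuffle x y) z w = sh w (mixcomp x z) (mixcomp y z) := by
  intro n
  induction n with
  | zero =>
    intro w hw x y z
    obtain rfl : w = [] := List.length_eq_zero_iff.mp (Nat.le_zero.mp hw)
    rw [mixcomp_nil, sh_nil, mixcomp_nil, mixcomp_nil]; rfl
  | succ n ih =>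
    intro w hw x y z
    match w with
    | [] => rw [mixcomp_nil, sh_nil, mixcomp_nil, mixcomp_nil]; rfl
    | true :: w =>
      have hw' : w.length ≤ n := by simp at hw; omega
      have hD : Dl true (shuffle x y)
          = fun u => shuffle (Dl true x) y u + shuffle x (Dl true y) u := rfl
      rw [mixcomp_true, hD, mixcomp_add_fun, sh_add_right]
      have e1 : sh w z.1 (mixcomp (shuffle (Dl true x) y) z)
          = sh w z.1 (shuffle (mixcomp (Dl true x) z) (mixcomp y z)) :=
        sh_congr w (fun _ _ => rfl) (fun u hu => ih u (le_trans hu hw') _ _ z)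
      have e2 : sh w z.1 (mixcomp (shuffle x (Dl true y)) z)
          = sh w z.1 (shuffle (mixcomp x z) (mixcomp (Dl true y) z)) :=
        sh_congr w (fun _ _ => rfl) (fun u hu => ih u (le_trans hu hw') _ _ z)
      rw [e1, e2, sh_cons]
      have hx : Dl true (mixcomp x z) = shuffle z.1 (mixcomp (Dl true x) z) :=
        funext fun u => mixcomp_true x z u
      have hy : Dl true (mixcomp y z) = shuffle z.1 (mixcomp (Dl true y) z) :=
        funext fun u => mixcomp_true y z u
      rw [hx, hy, sh_assoc, sh_left_comm w (mixcomp x z) z.1]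
    | false :: w =>
      have hw' : w.length ≤ n := by simp at hw; omega
      have hD0 : Dl false (shuffle x y)
          = fun u => shuffle (Dl false x) y u + shuffle x (Dl false y) u := rfl
      have hD1 : Dl true (shuffle x y)
          = fun u => shuffle (Dl true x) y u + shuffle x (Dl true y) u := rfl
      rw [mixcomp_false, hD0, hD1, mixcomp_add, mixcomp_add_fun, sh_add_right]
      rw [ih w hw' (Dl false x) y z, ih w hw' x (Dl false y) z]
      have e1 : sh w z.2 (mixcomp (shuffle (Dl true x) y) z)
          = sh w z.2 (shuffle (mixcomp (Dl true x) z) (mixcomp y z)) :=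
        sh_congr w (fun _ _ => rfl) (fun u hu => ih u (le_trans hu hw') _ _ z)
      have e2 : sh w z.2 (mixcomp (shuffle x (Dl true y)) z)
          = sh w z.2 (shuffle (mixcomp x z) (mixcomp (Dl true y) z)) :=
        sh_congr w (fun _ _ => rfl) (fun u hu => ih u (le_trans hu hw') _ _ z)
      rw [e1, e2, sh_cons]
      have hx : Dl false (mixcomp x z)
          = fun u => mixcomp (Dl false x) z u + shuffle z.2 (mixcomp (Dl true x) z) u :=
        funext fun u => mixcomp_false x z u
      have hy : Dl false (mixcomp y z)
          = fun u => mixcomp (Dl false y) z u + shuffle z.2 (mixcomp (Dl true y) z) u :=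
        funext fun u => mixcomp_false y z u
      rw [hx, hy, sh_add_left, sh_add_right, sh_assoc,
        sh_left_comm w (mixcomp x z) z.2]
      ring

lemma mixcomp_shuffle (x y : Series) (z : Series × Series) :
    mixcomp (shuffle x y) z = shuffle (mixcomp x z) (mixcomp y z) :=
  funext fun w => mixcomp_shuffle_aux w.length w le_rfl x y z

lemma mixcomp_mixcomp_aux : ∀ (n : ℕ) (w : Word), w.length ≤ n → ∀ (c : Series)
    (d e : Series × Series), mixcomp (mixcomp c d) e w = mixcomp c (starOp d e) w := by
  intro n
  induction n with
  | zero =>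
    intro w hw c d e
    obtain rfl : w = [] := List.length_eq_zero_iff.mp (Nat.le_zero.mp hw)
    rw [mixcomp_nil, mixcomp_nil, mixcomp_nil]
  | succ n ih =>
    intro w hw c d e
    match w with
    | [] => rw [mixcomp_nil, mixcomp_nil, mixcomp_nil]
    | true :: w =>
      have hw' : w.length ≤ n := by simp at hw; omega
      have hD : Dl true (mixcomp c d) = shuffle d.1 (mixcomp (Dl true c) d) :=
        funext fun u => mixcomp_true c d u
      rw [mixcomp_true, hD, mixcomp_shuffle]
      have e1 : sh w e.1 (shuffle (mixcomp d.1 e) (mixcomp (mixcomp (Dl true c) d) e))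
          = sh w e.1 (shuffle (mixcomp d.1 e) (mixcomp (Dl true c) (starOp d e))) :=
        sh_congr w (fun _ _ => rfl) (fun u hu =>
          sh_congr u (fun _ _ => rfl) (fun v hv => ih v (le_trans hv (le_trans hu hw')) _ d e))
      rw [e1, mixcomp_true]
      have hs : (starOp d e).1 = shuffle (mixcomp d.1 e) e.1 := rfl
      rw [hs, sh_assoc, sh_left_comm]
    | false :: w =>
      have hw' : w.length ≤ n := by simp at hw; omega
      have hD0 : Dl false (mixcomp c d)
          = fun u => mixcomp (Dl false c) d u + shuffle d.2 (mixcomp (Dl true c) d) u :=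
        funext fun u => mixcomp_false c d u
      have hD1 : Dl true (mixcomp c d) = shuffle d.1 (mixcomp (Dl true c) d) :=
        funext fun u => mixcomp_true c d u
      rw [mixcomp_false, hD0, hD1, mixcomp_add, mixcomp_shuffle, mixcomp_shuffle]
      rw [ih w hw' (Dl false c) d e]
      have e1 : sh w e.2 (shuffle (mixcomp d.1 e) (mixcomp (mixcomp (Dl true c) d) e))
          = sh w e.2 (shuffle (mixcomp d.1 e) (mixcomp (Dl true c) (starOp d e))) :=
        sh_congr w (fun _ _ => rfl) (fun u hu =>
          sh_congr u (fun _ _ => rfl) (fun v hv => ih v (le_trans hv (le_trans hu hw')) _ d e))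
      have e2 : shuffle (mixcomp d.2 e) (mixcomp (mixcomp (Dl true c) d) e) w
          = shuffle (mixcomp d.2 e) (mixcomp (Dl true c) (starOp d e)) w :=
        sh_congr w (fun _ _ => rfl) (fun v hv => ih v (le_trans hv hw') _ d e)
      rw [e1, e2, mixcomp_false]
      have hs : (starOp d e).2
          = fun u => mixcomp d.2 e u + shuffle (mixcomp d.1 e) e.2 u := rfl
      rw [hs, sh_add_left, sh_assoc, sh_left_comm w (mixcomp d.1 e) e.2]
      have hfin : shuffle (mixcomp d.2 e) (mixcomp (Dl true c) (starOp d e)) w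
          = sh w (mixcomp d.2 e) (mixcomp (Dl true c) (starOp d e)) := rfl
      rw [hfin]
      ring

lemma mixcomp_mixcomp (c : Series) (d e : Series × Series) :
    mixcomp (mixcomp c d) e = mixcomp c (starOp d e) :=
  funext fun w => mixcomp_mixcomp_aux w.length w le_rfl c d e

lemma shuffle_assoc (x y c : Series) : shuffle (shuffle x y) c = shuffle x (shuffle y c) :=
  funext fun w => sh_assoc w x y c

lemma shuffle_add_right (x y y' : Series) :
    shuffle x (fun u => y u + y' u) = fun w => shuffle x y w + shuffle x y' w :=
  funext fun w => sh_add_right w x y y'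

lemma shuffle_one_right (x : Series) : shuffle x oneS = x :=
  funext fun w => by rw [shuffle, sh_comm, sh_one_left]

lemma shuffle_one_left (x : Series) : shuffle oneS x = x :=
  funext fun w => sh_one_left w x

/-- the Grossman–Larson product c ⋆ d = (c ◁ d) · d on G is
associative, has identity e = (1∅,0), in components equals
((c₁ ∘̃ d) ⧢ d₁, (c₂ ∘̃ d) + (c₁ ∘̃ d) ⧢ d₂), and G is stable under it;
hence (G, ⋆) is a monoid. -/
theorem starOp_monoid :
    (∀ c d e : Series × Series, c.1 [] = 1 → d.1 [] = 1 → e.1 [] = 1 →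
      starOp (starOp c d) e = starOp c (starOp d e)) ∧
    (∀ c : Series × Series, c.1 [] = 1 → starOp c geId = c ∧ starOp geId c = c) ∧
    (∀ c d : Series × Series,
      starOp c d = (shuffle (mixcomp c.1 d) d.1,
                    mixcomp c.2 d + shuffle (mixcomp c.1 d) d.2)) ∧
    (∀ c d : Series × Series, c.1 [] = 1 → d.1 [] = 1 →
      (starOp c d).1 [] = 1) := by
  refine ⟨?_, ?_, ?_, ?_⟩
  · intro c d e _ _ _
    have h1 : (starOp (starOp c d) e).1 = (starOp c (starOp d e)).1 := by
      show shuffle (mixcomp (shuffle (mixcomp c.1 d) d.1) e) e.1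
        = shuffle (mixcomp c.1 (starOp d e)) (shuffle (mixcomp d.1 e) e.1)
      rw [mixcomp_shuffle, mixcomp_mixcomp, shuffle_assoc]
    have h2 : (starOp (starOp c d) e).2 = (starOp c (starOp d e)).2 := by
      show mixcomp (fun u => mixcomp c.2 d u + shuffle (mixcomp c.1 d) d.2 u) e
          + shuffle (mixcomp (shuffle (mixcomp c.1 d) d.1) e) e.2
        = mixcomp c.2 (starOp d e)
          + shuffle (mixcomp c.1 (starOp d e))
              (fun u => mixcomp d.2 e u + shuffle (mixcomp d.1 e) e.2 u)
      rw [mixcomp_add_fun, mixcomp_mixcomp, mixcomp_shuffle, mixcomp_shuffle,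
        mixcomp_mixcomp, shuffle_add_right, shuffle_assoc]
      funext w
      show mixcomp c.2 (starOp d e) w
          + shuffle (mixcomp c.1 (starOp d e)) (mixcomp d.2 e) w
          + shuffle (mixcomp c.1 (starOp d e)) (shuffle (mixcomp d.1 e) e.2) w
        = mixcomp c.2 (starOp d e) w
          + (shuffle (mixcomp c.1 (starOp d e)) (mixcomp d.2 e) w
            + shuffle (mixcomp c.1 (starOp d e)) (shuffle (mixcomp d.1 e) e.2) w)
      ring
    exact Prod.ext h1 h2
  · intro c _
    constructor
    · have h1 : (starOp c geId).1 = c.1 := by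
        show shuffle (mixcomp c.1 geId) oneS = c.1
        rw [mixcomp_geId_fun, shuffle_one_right]
      have h2 : (starOp c geId).2 = c.2 := by
        show mixcomp c.2 geId + shuffle (mixcomp c.1 geId) (0 : Series) = c.2
        rw [mixcomp_geId_fun, mixcomp_geId_fun]
        have hz : shuffle c.1 (0 : Series) = 0 :=
          funext fun w => sh_zero_right w c.1
        rw [hz, add_zero]
      exact Prod.ext h1 h2
    · have h1 : (starOp geId c).1 = c.1 := by
        show shuffle (mixcomp oneS c) c.1 = c.1
        rw [mixcomp_oneS, shuffle_one_left]
      have h2 : (starOp geId c).2 = c.2 := by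
        show mixcomp (0 : Series) c + shuffle (mixcomp oneS c) c.2 = c.2
        have hz : mixcomp (0 : Series) c = 0 := mixcomp_zero c
        rw [hz, mixcomp_oneS, shuffle_one_left, zero_add]
      exact Prod.ext h1 h2
  · intro c d; rfl
  · intro c d hc hd
    show sh [] (mixcomp c.1 d) d.1 = 1
    rw [sh_nil, mixcomp_nil, hc, hd, mul_one]
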